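/- Let Σ be a finite nonempty alphabet and let L ⊆ ℬ^Σ be a tree language with P_lim(L) = 0. If for every tree S ∈ ℬ^Σ there exists T ∈ L with S ⪯ T (i.e. L has no forbidden subtree), then L is not regular. -/

import Mathlib

open Filter Topology

namespace Sparse

inductive BTree (α : Type*) where
  | nil : BTree α
  | node : α → BTree α → BTree α → BTree α

namespace BTree

variable {α : Type*}

/-- The number of nodes of a binary tree. -/
def size : BTree α → ℕ
  | nil => 0
  | node _ l r => size l + size r + 1

/-- `Subtree S T` means `S = T`, or `T` is nonempty and `S` is a subtree of the left or
right subtree of the root of `T`. -/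
inductive Subtree : BTree α → BTree α → Prop where
  | refl (T : BTree α) : Subtree T T
  | left {S l r : BTree α} {a : α} : Subtree S l → Subtree S (node a l r)
  | right {S l r : BTree α} {a : α} : Subtree S r → Subtree S (node a l r)

end BTree

variable {α : Type*}

/-- A run of a tree automaton with transition relation `Δ` on a binary tree: the empty tree is
assigned `none` (i.e. `⊥`), and a nonempty tree with root label `a` and run values `ql`, `qr` on
the two subtrees is assigned a state `q` with `(ql, qr, a, q) ∈ Δ`. -/
inductive Run {Q : Type*} (Δ : Option Q → Option Q → α → Q → Prop) :
    BTree α → Option Q → Prop where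
  | nil : Run Δ BTree.nil none
  | node {a : α} {l r : BTree α} {ql qr : Option Q} {q : Q} :
      Run Δ l ql → Run Δ r qr → Δ ql qr a q → Run Δ (BTree.node a l r) (some q)

/-- A tree automaton with transitions `Δ` and accepting states `F` accepts `T` if some run
assigns `T` a state in `F`. -/
def TAccepts {Q : Type*} (Δ : Option Q → Option Q → α → Q → Prop) (F : Set Q)
    (T : BTree α) : Prop :=
  ∃ q ∈ F, Run Δ T (some q)

/-- A tree language is regular iff it is the set of trees accepted by some tree automaton
with finitely many states. -/
def RegularTreeLang (L : Set (BTree α)) : Prop :=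
  ∃ (Q : Type) (_ : Fintype Q) (Δ : Option Q → Option Q → α → Q → Prop) (F : Set Q),
    L = {T | TAccepts Δ F T}

/-- The relative number of `n`-node trees in `L`:
`|L ∩ ℬ^Σ_n| / (C_n ⬝ |Σ|^n)`, where `C_n` is the `n`-th Catalan number. -/
noncomputable def density [Fintype α] (L : Set (BTree α)) (n : ℕ) : ℝ :=
  (Nat.card {T : BTree α // T ∈ L ∧ T.size = n} : ℝ) /
    ((catalan n : ℝ) * (Fintype.card α : ℝ) ^ n)

/-- `L` has asymptotic density `c` if `density L n` tends to `c` as `n → ∞`. -/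
def HasDensity [Fintype α] (L : Set (BTree α)) (c : ℝ) : Prop :=
  Tendsto (density L) atTop (𝓝 c)

/-- The upper asymptotic density `P̄_lim(L) = limsup_n density L n`. -/
noncomputable def upperDensity [Fintype α] (L : Set (BTree α)) : ℝ :=
  limsup (density L) atTop

/-- `LT = {conc_a(S, T) : a ∈ Σ, S ∈ L}`. -/
def concL (L : Set (BTree α)) (T : BTree α) : Set (BTree α) :=
  {X | ∃ (a : α) (S : BTree α), S ∈ L ∧ X = BTree.node a S T}

/-- `LT⁻¹ = {S : ∃ a, conc_a(S, T) ∈ L}`. -/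
def quotR (L : Set (BTree α)) (T : BTree α) : Set (BTree α) :=
  {S | ∃ a : α, BTree.node a S T ∈ L}

/-- `T⁻¹L = {S : ∃ a, conc_a(T, S) ∈ L}`. -/
def quotL (T : BTree α) (L : Set (BTree α)) : Set (BTree α) :=
  {S | ∃ a : α, BTree.node a T S ∈ L}

/-- `L[T_k, …, T_1]⁻¹`, where the list is `[T_k, …, T_1]` (so the head is `T_k`):
`L[]⁻¹ = L` and `L[T_k,…,T_1]⁻¹ = (L[T_{k-1},…,T_1]⁻¹)T_k⁻¹ ∪ T_k⁻¹(L[T_{k-1},…,T_1]⁻¹)`. -/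
def quotIter (L : Set (BTree α)) : List (BTree α) → Set (BTree α)
  | [] => L
  | T :: Ts => quotR (quotIter L Ts) T ∪ quotL T (quotIter L Ts)

/-- A state `q` is reachable if some run of the automaton on some tree assigns `q` to the tree. -/
def TReachable {Q : Type*} (Δ : Option Q → Option Q → α → Q → Prop) (q : Q) : Prop :=
  ∃ T : BTree α, Run Δ T (some q)

/-- A set of states `V` is a sink if every transition involving a state of `V` as one of the
two child values leads into `V`. -/
def Sink {Q : Type*} (Δ : Option Q → Option Q → α → Q → Prop) (V : Set Q) : Prop :=
  ∀ q ∈ V, ∀ (q' : Option Q) (a : α) (q'' : Q),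
    (Δ (some q) q' a q'' ∨ Δ q' (some q) a q'') → q'' ∈ V

section AuxSparse
set_option linter.unusedSectionVars false

-- Contexts
inductive Ctx (α : Type*) where
  | hole : Ctx α
  | left : α → Ctx α → BTree α → Ctx α
  | right : α → BTree α → Ctx α → Ctx α

namespace Ctx

def fill : Ctx α → BTree α → BTree α
  | hole, X => X
  | left a C r, X => BTree.node a (C.fill X) r
  | right a l C, X => BTree.node a l (C.fill X)

def csize : Ctx α → ℕ
  | hole => 0
  | left _ C r => C.csize + r.size + 1
  | right _ l C => l.size + C.csize + 1

lemma size_fill (C : Ctx α) (X : BTree α) : (C.fill X).size = X.size + C.csize := by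
  induction C <;> simp [fill, csize, BTree.size, *] <;> ring

lemma fill_injective (C : Ctx α) : Function.Injective C.fill := by
  induction C with
  | hole => exact fun X Y h => h
  | left a C r ih => intro X Y h; simp only [fill, BTree.node.injEq] at h; exact ih h.2.1
  | right a l C ih => intro X Y h; simp only [fill, BTree.node.injEq] at h; exact ih h.2.2

lemma of_subtree {S T : BTree α} (h : BTree.Subtree S T) : ∃ C : Ctx α, T = C.fill S := by
  induction h with
  | refl => exact ⟨hole, rfl⟩
  | left _ ih => obtain ⟨C, rfl⟩ := ih; exact ⟨left _ C _, rfl⟩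
  | right _ ih => obtain ⟨C, rfl⟩ := ih; exact ⟨right _ _ C, rfl⟩

lemma run_fill {Q : Type*} {Δ : Option Q → Option Q → α → Q → Prop} (C : Ctx α)
    {S : BTree α} {p : Option Q} (h : Run Δ (C.fill S) p) :
    ∃ q, Run Δ S q ∧ ∀ X, Run Δ X q → Run Δ (C.fill X) p := by
  induction C generalizing p with
  | hole => exact ⟨p, h, fun X hX => hX⟩
  | left a C r ih =>
    rw [show (Ctx.left a C r).fill S = BTree.node a (C.fill S) r from rfl] at h
    cases h with
    | node hl hr hd =>
      obtain ⟨q, hq, hall⟩ := ih hl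
      exact ⟨q, hq, fun X hX => Run.node (hall X hX) hr hd⟩
  | right a l C ih =>
    rw [show (Ctx.right a l C).fill S = BTree.node a l (C.fill S) from rfl] at h
    cases h with
    | node hl hr hd =>
      obtain ⟨q, hq, hall⟩ := ih hr
      exact ⟨q, hq, fun X hX => Run.node hl (hall X hX) hd⟩

end Ctx

section Counting

open Tree in
/-- the unlabeled shape of a tree -/
def shape : BTree α → Tree Unit
  | BTree.nil => Tree.nil
  | BTree.node _ l r => Tree.node () (shape l) (shape r)

/-- the list of labels in preorder -/
def labels : BTree α → List α
  | BTree.nil => []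
  | BTree.node a l r => a :: (labels l ++ labels r)

lemma length_labels (T : BTree α) : (labels T).length = T.size := by
  induction T with
  | nil => rfl
  | node a l r ihl ihr => simp [labels, BTree.size, ihl, ihr]

lemma numNodes_shape (T : BTree α) : (shape T).numNodes = T.size := by
  induction T with
  | nil => rfl
  | node a l r ihl ihr => simp [shape, BTree.size, Tree.numNodes, ihl, ihr]

lemma shape_labels_inj {T₁ T₂ : BTree α} (hs : shape T₁ = shape T₂)
    (hl : labels T₁ = labels T₂) : T₁ = T₂ := by
  induction T₁ generalizing T₂ with
  | nil => cases T₂ with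
    | nil => rfl
    | node b l r => simp [shape] at hs
  | node a l r ihl ihr =>
    cases T₂ with
    | nil => simp [shape] at hs
    | node b l' r' =>
      simp only [shape, BinaryTree.node.injEq] at hs
      simp only [labels, List.cons.injEq] at hl
      have hlen : (labels l).length = (labels l').length := by
        rw [length_labels, length_labels, ← numNodes_shape, ← numNodes_shape, hs.2.1]
      obtain ⟨h1, h2⟩ := List.append_inj hl.2 hlen
      rw [hl.1, ihl hs.2.1 h1, ihr hs.2.2 h2]

variable [Inhabited α]

/-- label a shape with a list of labels (in preorder) -/
def lab : Tree Unit → List α → BTree α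
  | BinaryTree.nil, _ => BTree.nil
  | BinaryTree.node _ l r, ls =>
      BTree.node ls.headI (lab l (ls.tail.take l.numNodes)) (lab r (ls.tail.drop l.numNodes))

lemma lab_spec : ∀ (t : Tree Unit) (ls : List α), ls.length = t.numNodes →
    shape (lab t ls) = t ∧ labels (lab t ls) = ls := by
  intro t
  induction t with
  | nil =>
    intro ls h
    have : ls = [] := List.length_eq_zero_iff.mp h
    subst this
    exact ⟨rfl, rfl⟩
  | node _ l r ihl ihr =>
    intro ls h
    cases ls with
    | nil => simp [BinaryTree.numNodes] at h
    | cons a ls' =>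
      simp only [List.length_cons, BinaryTree.numNodes] at h
      have h' : ls'.length = l.numNodes + r.numNodes := by omega
      have h1 : (ls'.take l.numNodes).length = l.numNodes := by
        simp [List.length_take]; omega
      have h2 : (ls'.drop l.numNodes).length = r.numNodes := by
        simp [List.length_drop]; omega
      obtain ⟨s1, L1⟩ := ihl _ h1
      obtain ⟨s2, L2⟩ := ihr _ h2
      constructor
      · simp only [lab, List.headI, List.tail_cons, shape, s1, s2]
      · simp only [lab, List.headI, List.tail_cons, labels, L1, L2,
          List.take_append_drop]

lemma size_lab (t : Tree Unit) (ls : List α) (h : ls.length = t.numNodes) :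
    (lab t ls : BTree α).size = t.numNodes := by
  rw [← numNodes_shape, (lab_spec t ls h).1]

end Counting

section Fin

variable [Fintype α]

lemma shape_mem {n : ℕ} (T : BTree α) (h : T.size = n) :
    shape T ∈ Tree.treesOfNumNodesEq n := by
  rw [BinaryTree.mem_treesOfNumNodesEq]; exact (numNodes_shape T).trans h

lemma labels_len {n : ℕ} (T : BTree α) (h : T.size = n) : (labels T).length = n := by
  rw [length_labels]; exact h

lemma finite_sizeEq (n : ℕ) : Finite {T : BTree α // T.size = n} := by
  classical
  have hinj : Function.Injective
      ((fun T =>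
        (⟨shape T.1, shape_mem T.1 T.2⟩,
          ⟨labels T.1, labels_len T.1 T.2⟩)) :
        {T : BTree α // T.size = n} →
          {t : Tree Unit // t ∈ Tree.treesOfNumNodesEq n} × List.Vector α n) := by
    intro T₁ T₂ h
    simp only [Prod.mk.injEq, Subtype.mk.injEq] at h
    exact Subtype.ext (shape_labels_inj (congrArg (fun p => p.1.1) h) (congrArg (fun p => p.2.1) h))
  exact Finite.of_injective _ hinj

lemma finite_pred (P : BTree α → Prop) (n : ℕ) : Finite {T : BTree α // P T ∧ T.size = n} := by
  have := finite_sizeEq (α := α) n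
  exact Finite.of_injective
    (fun T : {T : BTree α // P T ∧ T.size = n} =>
      (⟨T.1, T.2.2⟩ : {T : BTree α // T.size = n}))
    (by intro T₁ T₂ h; simp only [Subtype.mk.injEq] at h; exact Subtype.ext h)

lemma card_sizeEq_ge [Nonempty α] (n : ℕ) :
    catalan n * Fintype.card α ^ n ≤ Nat.card {T : BTree α // T.size = n} := by
  classical
  have : Inhabited α := Classical.inhabited_of_nonempty ‹_›
  have hinj : Function.Injective
      (fun p : {t : Tree Unit // t ∈ Tree.treesOfNumNodesEq n} × List.Vector α n =>
        (⟨lab p.1.1 p.2.1,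
          by rw [size_lab _ _ (p.2.2.trans (BinaryTree.mem_treesOfNumNodesEq.mp p.1.2).symm)]
             exact (BinaryTree.mem_treesOfNumNodesEq.mp p.1.2)⟩ :
          {T : BTree α // T.size = n})) := by
    intro p₁ p₂ h
    simp only [Subtype.mk.injEq] at h
    have hs₁ := lab_spec p₁.1.1 p₁.2.1 (p₁.2.2.trans (BinaryTree.mem_treesOfNumNodesEq.mp p₁.1.2).symm)
    have hs₂ := lab_spec p₂.1.1 p₂.2.1 (p₂.2.2.trans (BinaryTree.mem_treesOfNumNodesEq.mp p₂.1.2).symm)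
    have ht : p₁.1.1 = p₂.1.1 := by rw [← hs₁.1, ← hs₂.1, h]
    have hls : p₁.2.1 = p₂.2.1 := by rw [← hs₁.2, ← hs₂.2, h]
    exact Prod.ext (Subtype.ext ht) (Subtype.ext hls)
  have := finite_sizeEq (α := α) n
  have hle := Nat.card_le_card_of_injective _ hinj
  rwa [Nat.card_prod, Nat.card_eq_fintype_card, Nat.card_eq_fintype_card,
    Fintype.card_coe, BinaryTree.treesOfNumNodesEq_card_eq_catalan, card_vector] at hle

end Fin

lemma catalan_pos' (n : ℕ) : 0 < catalan n := by
  rcases Nat.eq_zero_or_pos (catalan n) with h | h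
  · exfalso
    have := succ_mul_catalan_eq_centralBinom n
    rw [h, Nat.mul_zero] at this
    exact (Nat.centralBinom_pos n).ne' this.symm
  · exact h

lemma catalan_succ_le (n : ℕ) : catalan (n + 1) ≤ 4 * catalan n := by
  have key : (n + 2) * catalan (n + 1) = 2 * (2 * n + 1) * catalan n := by
    apply Nat.eq_of_mul_eq_mul_left (show 0 < n + 1 by omega)
    calc (n + 1) * ((n + 2) * catalan (n + 1))
        = (n + 1) * Nat.centralBinom (n + 1) := by
          rw [show n + 2 = n + 1 + 1 from rfl, succ_mul_catalan_eq_centralBinom]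
      _ = 2 * (2 * n + 1) * Nat.centralBinom n := Nat.succ_mul_centralBinom_succ n
      _ = 2 * (2 * n + 1) * ((n + 1) * catalan n) := by rw [succ_mul_catalan_eq_centralBinom]
      _ = (n + 1) * (2 * (2 * n + 1) * catalan n) := by ring
  refine Nat.le_of_mul_le_mul_left ?_ (show 0 < n + 2 by omega)
  rw [key]
  calc 2 * (2 * n + 1) * catalan n ≤ 4 * (n + 2) * catalan n :=
        Nat.mul_le_mul_right _ (by omega)
    _ = (n + 2) * (4 * catalan n) := by ring

lemma catalan_add_le (n c : ℕ) : catalan (n + c) ≤ 4 ^ c * catalan n := by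
  induction c with
  | zero => simpa using le_refl _
  | succ c ih =>
    calc catalan (n + (c + 1)) = catalan ((n + c) + 1) := by ring_nf
      _ ≤ 4 * catalan (n + c) := catalan_succ_le _
      _ ≤ 4 * (4 ^ c * catalan n) := Nat.mul_le_mul_left _ ih
      _ = 4 ^ (c + 1) * catalan n := by ring

lemma nat_card_sigma {ι : Type*} [Fintype ι] (f : ι → Type*) [∀ i, Finite (f i)] :
    Nat.card (Σ i, f i) = ∑ i, Nat.card (f i) := by
  classical
  have : ∀ i, Fintype (f i) := fun i => Fintype.ofFinite _
  simp only [Nat.card_eq_fintype_card]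
  exact Fintype.card_sigma

end AuxSparse

/-- A tree language of asymptotic density 0 without a forbidden subtree is
not regular. -/
theorem not_regular_of_sparse_without_forbidden_subtree {α : Type*} [Fintype α] [Nonempty α]
    (L : Set (BTree α)) (h0 : HasDensity L 0)
    (hno : ∀ S : BTree α, ∃ T ∈ L, BTree.Subtree S T) :
    ¬ RegularTreeLang L := by
  classical
  rintro ⟨Q, hQ, Δ, F, hL⟩
  haveI := hQ
  set A := Fintype.card α with hA
  have hApos : 0 < A := Fintype.card_pos
  -- productive run values
  let Pr : Option Q → Prop := fun q => ∃ C : Ctx α, ∀ X, Run Δ X q → C.fill X ∈ L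
  have hstep : ∀ S : BTree α, ∃ q, Run Δ S q ∧ Pr q := by
    intro S
    obtain ⟨T, hTL, hsub⟩ := hno S
    obtain ⟨C, rfl⟩ := Ctx.of_subtree hsub
    have hacc : TAccepts Δ F (C.fill S) := by rw [hL] at hTL; exact hTL
    obtain ⟨f, hf, hrun⟩ := hacc
    obtain ⟨q, hq, hall⟩ := Ctx.run_fill C hrun
    exact ⟨q, hq, C, fun X hX => by rw [hL]; exact ⟨f, hf, hall X hX⟩⟩
  set k := Fintype.card (Option Q) with hk
  have hkpos : 0 < k := Fintype.card_pos
  -- counting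
  let N : ℕ → Option Q → ℕ := fun n q =>
    Nat.card {X : BTree α // (Run Δ X q ∧ Pr q) ∧ X.size = n}
  have hfinN : ∀ (n : ℕ) (q : Option Q),
      Finite {X : BTree α // (Run Δ X q ∧ Pr q) ∧ X.size = n} :=
    fun n q => finite_pred _ n
  have claimA : ∀ n, catalan n * A ^ n ≤ ∑ q : Option Q, N n q := by
    intro n
    have hfin := finite_sizeEq (α := α) n
    have hfinS : Finite (Σ q : Option Q, {X : BTree α // (Run Δ X q ∧ Pr q) ∧ X.size = n}) := by
      have := hfinN
      infer_instance
    have hinj : Function.Injective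
        ((fun T => ⟨Classical.choose (hstep T.1), T.1,
            ⟨(Classical.choose_spec (hstep T.1)).1, (Classical.choose_spec (hstep T.1)).2⟩,
            T.2⟩) :
          {T : BTree α // T.size = n} →
            Σ q : Option Q, {X : BTree α // (Run Δ X q ∧ Pr q) ∧ X.size = n}) := by
      intro T₁ T₂ h
      exact Subtype.ext (congrArg
        (fun p : Σ q : Option Q, {X : BTree α // (Run Δ X q ∧ Pr q) ∧ X.size = n} =>
          (p.2.1 : BTree α)) h)
    calc catalan n * A ^ n ≤ Nat.card {T : BTree α // T.size = n} := card_sizeEq_ge n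
      _ ≤ Nat.card (Σ q : Option Q, {X : BTree α // (Run Δ X q ∧ Pr q) ∧ X.size = n}) :=
          Nat.card_le_card_of_injective _ hinj
      _ = ∑ q : Option Q, N n q := nat_card_sigma _
  -- pigeonhole over n
  have hpick : ∀ n, ∃ q, catalan n * A ^ n ≤ k * N n q := by
    intro n
    have hsum : ∑ _q : Option Q, (catalan n * A ^ n) ≤ ∑ q : Option Q, k * N n q := by
      rw [Finset.sum_const, Finset.card_univ, ← Finset.mul_sum, smul_eq_mul, ← hk]
      exact Nat.mul_le_mul_left k (claimA n)
    obtain ⟨q, _, hq⟩ := Finset.exists_le_of_sum_le Finset.univ_nonempty hsum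
    exact ⟨q, hq⟩
  choose g hg using hpick
  obtain ⟨q0, hq0⟩ := Finite.exists_infinite_fiber g
  have hI : {n : ℕ | catalan n * A ^ n ≤ k * N n q0}.Infinite := by
    refine (Set.infinite_coe_iff.mp hq0).mono ?_
    intro n hn
    have : g n = q0 := hn
    simpa [this] using hg n
  -- productivity witness for q0
  have hcatpos : ∀ m : ℕ, 0 < catalan m * A ^ m := fun m =>
    Nat.mul_pos (catalan_pos' m) (pow_pos hApos m)
  obtain ⟨n0, hn0⟩ := hI.nonempty
  have hN0 : 0 < N n0 q0 := by
    rcases Nat.eq_zero_or_pos (N n0 q0) with h | h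
    · exfalso
      have h2 : catalan n0 * A ^ n0 ≤ k * N n0 q0 := hn0
      rw [h, Nat.mul_zero] at h2
      exact absurd h2 (Nat.not_le.mpr (hcatpos n0))
    · exact h
  have hne : Nonempty {X : BTree α // (Run Δ X q0 ∧ Pr q0) ∧ X.size = n0} := by
    have := hfinN n0 q0
    exact (Nat.card_pos_iff.mp hN0).1
  obtain ⟨X0⟩ := hne
  have hp : ∃ C : Ctx α, ∀ X, Run Δ X q0 → C.fill X ∈ L := X0.2.1.2
  obtain ⟨C, hC⟩ := hp
  set c := C.csize with hc
  -- from N to card of L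
  have hLn : ∀ n, N n q0 ≤ Nat.card {T : BTree α // T ∈ L ∧ T.size = n + c} := by
    intro n
    have hfin := finite_pred (fun T : BTree α => T ∈ L) (n + c)
    refine Nat.card_le_card_of_injective
      ((fun X => ⟨C.fill X.1, hC X.1 X.2.1.1, by rw [Ctx.size_fill, X.2.2]⟩) :
        {X : BTree α // (Run Δ X q0 ∧ Pr q0) ∧ X.size = n} →
          {T : BTree α // T ∈ L ∧ T.size = n + c}) ?_
    intro X₁ X₂ h
    exact Subtype.ext (C.fill_injective (Subtype.ext_iff.mp h))
  -- density lower bound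
  set δ : ℝ := ((k : ℝ) * 4 ^ c * (A : ℝ) ^ c)⁻¹ with hδdef
  have hKpos : (0 : ℝ) < (k : ℝ) * 4 ^ c * (A : ℝ) ^ c := by positivity
  have hδpos : 0 < δ := by rw [hδdef]; positivity
  have hdens : ∀ n ∈ {n : ℕ | catalan n * A ^ n ≤ k * N n q0}, δ ≤ density L (n + c) := by
    intro n hn
    set m := Nat.card {T : BTree α // T ∈ L ∧ T.size = n + c} with hm
    have key : catalan (n + c) * A ^ (n + c) ≤ m * (k * (4 ^ c * A ^ c)) :=
      calc catalan (n + c) * A ^ (n + c)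
          ≤ (4 ^ c * catalan n) * A ^ (n + c) :=
            Nat.mul_le_mul_right _ (catalan_add_le n c)
        _ = (catalan n * A ^ n) * (4 ^ c * A ^ c) := by rw [pow_add]; ring
        _ ≤ (k * N n q0) * (4 ^ c * A ^ c) := Nat.mul_le_mul_right _ hn
        _ ≤ (k * m) * (4 ^ c * A ^ c) :=
            Nat.mul_le_mul_right _ (Nat.mul_le_mul_left _ (hLn n))
        _ = m * (k * (4 ^ c * A ^ c)) := by ring
    have keyR : ((catalan (n + c) : ℝ)) * (A : ℝ) ^ (n + c) ≤
        (m : ℝ) * ((k : ℝ) * (4 ^ c * (A : ℝ) ^ c)) := by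
      have h' : ((catalan (n + c) * A ^ (n + c) : ℕ) : ℝ) ≤
          ((m * (k * (4 ^ c * A ^ c)) : ℕ) : ℝ) := Nat.cast_le.mpr key
      push_cast at h'
      convert h' using 1 <;> push_cast <;> ring
    have hDpos : (0 : ℝ) < (catalan (n + c) : ℝ) * (A : ℝ) ^ (n + c) := by
      have := catalan_pos' (n + c)
      positivity
    rw [density, ← hA, ← hm, hδdef]
    rw [le_div_iff₀ hDpos, inv_mul_le_iff₀ hKpos]
    calc (catalan (n + c) : ℝ) * (A : ℝ) ^ (n + c)
        ≤ (m : ℝ) * ((k : ℝ) * (4 ^ c * (A : ℝ) ^ c)) := keyR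
      _ = ((k : ℝ) * 4 ^ c * (A : ℝ) ^ c) * (m : ℝ) := by ring
  -- conclude
  have h0' : Tendsto (density L) atTop (𝓝 0) := h0
  have hev : ∀ᶠ mm in atTop, density L mm < δ := h0'.eventually (gt_mem_nhds hδpos)
  obtain ⟨M, hM⟩ := eventually_atTop.mp hev
  obtain ⟨n, hnI, hnM⟩ := hI.exists_gt M
  have hge : δ ≤ density L (n + c) := hdens n hnI
  have hlt : density L (n + c) < δ := hM (n + c) (by omega)
  exact absurd hge (not_le.mpr hlt)


end Sparse
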